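/- Let G be a connected k-uniform hypergraph with edges e = {u_1,…,u_k} and f = {v_1,…,v_k}, let U_1 = {u_1,…,u_r}, V_1 = {v_1,…,v_r} for some 1 ≤ r < k, U_2 = e∖U_1, V_2 = f∖V_1, and suppose e' = U_1 ∪ V_2 and f' = V_1 ∪ U_2 are k-element subsets of V(G) not in E(G). Let G' be obtained from G by the 2-switching exchanging U_1 with V_1, let 0 ≤ α < 1, and let x be the α-Perron vector of G. If x_{U_1} ≥ x_{V_1} and x_{U_2} ≤ x_{V_2}, then ρ_α(G') ≥ ρ_α(G), with equality if and only if x_{U_1} = x_{V_1} and x_{U_2} = x_{V_2}. -/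

import Mathlib

/-- A (finite) hypergraph on vertex type `V`: a finite set of edges, each a finite
set of vertices.  For the results below the vertex set is the whole type `V`. -/
structure Hypergraph' (V : Type*) where
  edges : Finset (Finset V)

namespace Hypergraph'

variable {V W : Type*}

/-- `G` is `k`-uniform: every edge has exactly `k` vertices. -/
def Uniform (G : Hypergraph' V) (k : ℕ) : Prop := ∀ e ∈ G.edges, e.card = k

/-- The degree of a vertex: the number of edges containing it. -/
def degree [DecidableEq V] (G : Hypergraph' V) (v : V) : ℕ :=
  (G.edges.filter fun e => v ∈ e).card

/-- A walk of length `l` from `u` to `v`: vertices `vs 0 = u, …, vs l = v` and edges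
`es 0, …, es (l-1)` with consecutive vertices lying in the corresponding edge. -/
def Walk (G : Hypergraph' V) (u v : V) (l : ℕ) : Prop :=
  ∃ (vs : Fin (l + 1) → V) (es : Fin l → Finset V),
    vs 0 = u ∧ vs (Fin.last l) = v ∧
    ∀ i : Fin l, es i ∈ G.edges ∧ vs i.castSucc ∈ es i ∧ vs i.succ ∈ es i

/-- `G` is connected: any two vertices are joined by a walk (equivalently, a path). -/
def Connected (G : Hypergraph' V) : Prop := ∀ u v : V, ∃ l, G.Walk u v l

/-- The distance between two vertices: the minimum length of a walk joining them. -/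
noncomputable def hdist (G : Hypergraph' V) (u v : V) : ℕ := sInf {l | G.Walk u v l}

/-- `G` has a cycle: distinct vertices `v_1, …, v_l` and distinct edges `e_1, …, e_l`
(`l ≥ 2`) with `{v_i, v_{i+1}} ⊆ e_i` (indices mod `l`). -/
def HasCycle (G : Hypergraph' V) : Prop :=
  ∃ (l : ℕ) (hl : 2 ≤ l) (vs : Fin l → V) (es : Fin l → Finset V),
    Function.Injective vs ∧ Function.Injective es ∧
    (∀ i, es i ∈ G.edges) ∧
    ∀ i : Fin l, vs i ∈ es i ∧ vs ⟨((i : ℕ) + 1) % l, Nat.mod_lt _ (by omega)⟩ ∈ es i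

/-- A `k`-uniform supertree: a `k`-uniform hypergraph that is connected and acyclic. -/
def IsSupertree (G : Hypergraph' V) (k : ℕ) : Prop :=
  G.Uniform k ∧ G.Connected ∧ ¬ G.HasCycle

/-- `e` is a pendent edge of `G`: one of its vertices has degree at least `2` and all
its other vertices have degree `1`. -/
def IsPendentEdge [DecidableEq V] (G : Hypergraph' V) (e : Finset V) : Prop :=
  e ∈ G.edges ∧ ∃ v ∈ e, 2 ≤ G.degree v ∧ ∀ w ∈ e, w ≠ v → G.degree w = 1

/-- `S` is an independent set: no two of its vertices lie in a common edge. -/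
def IsIndep (G : Hypergraph' V) (S : Finset V) : Prop :=
  ∀ u ∈ S, ∀ v ∈ S, u ≠ v → ∀ e ∈ G.edges, ¬ (u ∈ e ∧ v ∈ e)

/-- The independence number: the maximum size of an independent set. -/
noncomputable def indepNum (G : Hypergraph' V) : ℕ :=
  sSup {n | ∃ S : Finset V, G.IsIndep S ∧ S.card = n}

/-- `M` is a matching: a set of pairwise disjoint edges of `G`. -/
def IsMatching [DecidableEq V] (G : Hypergraph' V) (M : Finset (Finset V)) : Prop :=
  M ⊆ G.edges ∧ ∀ e ∈ M, ∀ f ∈ M, e ≠ f → e ∩ f = ∅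

/-- The matching number: the maximum size of a matching. -/
noncomputable def matchNum [DecidableEq V] (G : Hypergraph' V) : ℕ :=
  sSup {n | ∃ M : Finset (Finset V), G.IsMatching M ∧ M.card = n}

/-- The `α`-spectral radius of a (connected) `k`-uniform hypergraph:
`ρ_α(G) = max { Σ_{e∈E} ( α Σ_{v∈e} x_v^k + (1-α) k Π_{v∈e} x_v ) :
x ≥ 0, Σ_v x_v^k = 1 }`. -/
noncomputable def aspec [Fintype V] (G : Hypergraph' V) (k : ℕ) (α : ℝ) : ℝ :=
  sSup {r : ℝ | ∃ x : V → ℝ, (∀ v, 0 ≤ x v) ∧ (∑ v, x v ^ k) = 1 ∧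
    r = ∑ e ∈ G.edges, (α * ∑ v ∈ e, x v ^ k + (1 - α) * (k : ℝ) * ∏ v ∈ e, x v)}

/-- `x` is the `α`-Perron vector of `G`: the positive unit maximizer in the
variational characterization of `ρ_α(G)`. -/
def IsPerron [Fintype V] (G : Hypergraph' V) (k : ℕ) (α : ℝ) (x : V → ℝ) : Prop :=
  (∀ v, 0 < x v) ∧ (∑ v, x v ^ k) = 1 ∧
  (∑ e ∈ G.edges, (α * ∑ v ∈ e, x v ^ k + (1 - α) * (k : ℝ) * ∏ v ∈ e, x v)) =
    G.aspec k α

/-- The multiset of vertex degrees of `G` (the degree sequence up to ordering). -/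
noncomputable def degreeMultiset [Fintype V] [DecidableEq V] (G : Hypergraph' V) :
    Multiset ℕ :=
  (Finset.univ : Finset V).val.map G.degree

/-- Isomorphism of hypergraphs: a bijection of the vertex sets carrying edges to
edges. -/
def Iso [DecidableEq W] (G : Hypergraph' V) (H : Hypergraph' W) : Prop :=
  ∃ φ : V ≃ W, ∀ e : Finset V, e ∈ G.edges ↔ e.image φ ∈ H.edges

end Hypergraph'

namespace TwoSwitch

open Finset

variable {V : Type} [Fintype V] [DecidableEq V]
set_option linter.unusedSectionVars false

/-- The objective functional. -/
noncomputable def P (G : Hypergraph' V) (k : ℕ) (α : ℝ) (z : V → ℝ) : ℝ :=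
  ∑ g ∈ G.edges, (α * ∑ v ∈ g, z v ^ k + (1 - α) * (k : ℝ) * ∏ v ∈ g, z v)

noncomputable def aset (G : Hypergraph' V) (k : ℕ) (α : ℝ) : Set ℝ :=
  {r : ℝ | ∃ x : V → ℝ, (∀ v, 0 ≤ x v) ∧ (∑ v, x v ^ k) = 1 ∧
    r = ∑ e ∈ G.edges, (α * ∑ v ∈ e, x v ^ k + (1 - α) * (k : ℝ) * ∏ v ∈ e, x v)}

lemma aspec_eq (G : Hypergraph' V) (k : ℕ) (α : ℝ) : G.aspec k α = sSup (aset G k α) := rfl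

lemma mem_aset {G : Hypergraph' V} {k : ℕ} {α : ℝ} {z : V → ℝ}
    (h0 : ∀ v, 0 ≤ z v) (h1 : (∑ v, z v ^ k) = 1) : P G k α z ∈ aset G k α :=
  ⟨z, h0, h1, rfl⟩

lemma bddAbove_aset (G : Hypergraph' V) {k : ℕ} {α : ℝ} (hk : 1 ≤ k)
    (hα0 : 0 ≤ α) (hα1 : α ≤ 1) : BddAbove (aset G k α) := by
  refine ⟨(G.edges.card : ℝ) * (α + (1 - α) * k), ?_⟩
  rintro r ⟨z, h0, h1, rfl⟩
  have hz1 : ∀ v, z v ≤ 1 := by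
    intro v
    have h2 : z v ^ k ≤ 1 := by
      have := Finset.single_le_sum (f := fun v => z v ^ k)
        (fun i _ => pow_nonneg (h0 i) k) (mem_univ v)
      rw [h1] at this; exact this
    exact (pow_le_one_iff_of_nonneg (h0 v) (by omega)).mp h2
  have hbound : ∀ g ∈ G.edges, α * ∑ v ∈ g, z v ^ k + (1 - α) * (k : ℝ) * ∏ v ∈ g, z v
      ≤ α + (1 - α) * k := by
    intro g _
    have hs : ∑ v ∈ g, z v ^ k ≤ 1 := by
      rw [← h1]
      exact Finset.sum_le_sum_of_subset_of_nonneg (subset_univ g)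
        (fun i _ _ => pow_nonneg (h0 i) k)
    have hp : ∏ v ∈ g, z v ≤ 1 := Finset.prod_le_one (fun i _ => h0 i) (fun i _ => hz1 i)
    have hk0 : (0:ℝ) ≤ (1 - α) * k := mul_nonneg (by linarith) (by positivity)
    nlinarith [mul_nonneg (sub_nonneg.mpr hα1) (sub_nonneg.mpr hp)]
  calc ∑ g ∈ G.edges, (α * ∑ v ∈ g, z v ^ k + (1 - α) * (k : ℝ) * ∏ v ∈ g, z v)
      ≤ ∑ _g ∈ G.edges, (α + (1 - α) * (k:ℝ)) := Finset.sum_le_sum hbound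
    _ = (G.edges.card : ℝ) * (α + (1 - α) * k) := by
        rw [Finset.sum_const, nsmul_eq_mul]

lemma P_le_aspec {G : Hypergraph' V} {k : ℕ} {α : ℝ} (hk : 1 ≤ k)
    (hα0 : 0 ≤ α) (hα1 : α ≤ 1) {z : V → ℝ}
    (h0 : ∀ v, 0 ≤ z v) (h1 : (∑ v, z v ^ k) = 1) : P G k α z ≤ G.aspec k α :=
  le_csSup (bddAbove_aset G hk hα0 hα1) (mem_aset h0 h1)

lemma aspec_le_of_forall {G : Hypergraph' V} {k : ℕ} {α : ℝ} {C : ℝ}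
    (hne : (aset G k α).Nonempty)
    (h : ∀ z : V → ℝ, (∀ v, 0 ≤ z v) → (∑ v, z v ^ k) = 1 → P G k α z ≤ C) :
    G.aspec k α ≤ C := by
  refine csSup_le hne ?_
  rintro r ⟨z, h0, h1, rfl⟩
  exact h z h0 h1


section Curve

variable {k : ℕ} {x : V → ℝ}

/-- scaling constant in the derivative of the feasible curve. -/
noncomputable def del (x : V → ℝ) (k : ℕ) (v : V) : ℝ :=
  (k : ℝ)⁻¹ * (x v ^ k) ^ ((k : ℝ)⁻¹ - 1)

/-- the feasible curve through `x` raising coordinate `a`, lowering `b`. -/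
noncomputable def zc (x : V → ℝ) (k : ℕ) (a b : V) (t : ℝ) (v : V) : ℝ :=
  if v = a then (x a ^ k + t) ^ ((k : ℝ)⁻¹)
  else if v = b then (x b ^ k - t) ^ ((k : ℝ)⁻¹) else x v

/-- derivative of the curve at `0`. -/
noncomputable def dvec (x : V → ℝ) (k : ℕ) (a b : V) (v : V) : ℝ :=
  if v = a then del x k a else if v = b then -del x k b else 0

noncomputable def Sv (G : Hypergraph' V) (x : V → ℝ) (v : V) : ℝ :=
  ∑ g ∈ G.edges, (if v ∈ g then ∏ w ∈ g.erase v, x w else 0)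

noncomputable def dg (G : Hypergraph' V) (v : V) : ℝ :=
  ∑ g ∈ G.edges, (if v ∈ g then 1 else 0)

noncomputable def Nv (G : Hypergraph' V) (k : ℕ) (α : ℝ) (x : V → ℝ) (v : V) : ℝ :=
  α * dg G v + (1 - α) * (k : ℝ) * (del x k v * Sv G x v)

lemma del_pos (hk : 1 ≤ k) {v : V} (hxv : 0 < x v) : 0 < del x k v := by
  have : (0:ℝ) < x v ^ k := pow_pos hxv k
  have hkR : (0:ℝ) < (k:ℝ) := by exact_mod_cast hk
  exact mul_pos (inv_pos.mpr hkR) (Real.rpow_pos_of_pos this _)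

lemma del_spec1 (hk : 1 ≤ k) {v : V} (hxv : 0 < x v) :
    (k : ℝ) * x v ^ (k - 1) * del x k v = 1 := by
  have hkR : ((k:ℕ) : ℝ) ≠ 0 := by positivity
  have hx0 : (0:ℝ) < x v := hxv
  rw [del]
  have h1 : (x v ^ k : ℝ) = x v ^ ((k : ℕ) : ℝ) := (Real.rpow_natCast _ _).symm
  have h2 : (x v ^ ((k:ℕ) : ℝ)) ^ ((k : ℝ)⁻¹ - 1) = x v ^ ((k:ℝ) * ((k:ℝ)⁻¹ - 1)) :=
    (Real.rpow_mul hx0.le _ _).symm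
  have h3 : (x v ^ (k - 1) : ℝ) = x v ^ (((k - 1 : ℕ)) : ℝ) := (Real.rpow_natCast _ _).symm
  have hzero : (((k - 1 : ℕ)) : ℝ) + (k:ℝ) * ((k:ℝ)⁻¹ - 1) = 0 := by
    have hc : (((k - 1 : ℕ)) : ℝ) = (k:ℝ) - 1 := by
      have := Nat.cast_sub (R := ℝ) hk
      simpa using this
    rw [hc]; field_simp; ring
  have key : x v ^ (k - 1) * (x v ^ k) ^ ((k : ℝ)⁻¹ - 1) = 1 := by
    rw [h1, h2, h3, ← Real.rpow_add hx0, hzero, Real.rpow_zero]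
  calc (k : ℝ) * x v ^ (k - 1) * ((k : ℝ)⁻¹ * (x v ^ k) ^ ((k : ℝ)⁻¹ - 1))
      = ((k:ℝ) * (k:ℝ)⁻¹) * (x v ^ (k - 1) * (x v ^ k) ^ ((k : ℝ)⁻¹ - 1)) := by ring
    _ = 1 := by rw [key, mul_inv_cancel₀ hkR, mul_one]

lemma del_spec2 (hk : 1 ≤ k) {v : V} (hxv : 0 < x v) :
    x v ^ k * ((k : ℝ) * del x k v) = x v := by
  have hkR : ((k:ℕ) : ℝ) ≠ 0 := by positivity
  have hp : (0:ℝ) < x v ^ k := pow_pos hxv k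
  rw [del]
  have hsimp : (k:ℝ) * ((k:ℝ)⁻¹ * (x v ^ k) ^ ((k : ℝ)⁻¹ - 1))
      = (x v ^ k) ^ ((k : ℝ)⁻¹ - 1) := by
    rw [← mul_assoc, mul_inv_cancel₀ hkR, one_mul]
  rw [hsimp]
  calc x v ^ k * (x v ^ k) ^ ((k : ℝ)⁻¹ - 1)
      = (x v ^ k) ^ (1:ℝ) * (x v ^ k) ^ ((k : ℝ)⁻¹ - 1) := by rw [Real.rpow_one]
    _ = (x v ^ k) ^ ((1:ℝ) + ((k : ℝ)⁻¹ - 1)) := (Real.rpow_add hp _ _).symm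
    _ = (x v ^ k) ^ ((k : ℝ)⁻¹) := by ring_nf
    _ = x v := Real.pow_rpow_inv_natCast hxv.le (by omega)


variable {a b : V} {t : ℝ}

lemma zc_ne (hva : v ≠ a) (hvb : v ≠ b) : zc x k a b t v = x v := by
  rw [zc, if_neg hva, if_neg hvb]

lemma zc_zero (hk : k ≠ 0) (hx0 : ∀ v, 0 ≤ x v) : zc x k a b 0 = x := by
  funext v
  rcases eq_or_ne v a with rfl | hva
  · rw [zc, if_pos rfl, add_zero, Real.pow_rpow_inv_natCast (hx0 v) hk]
  rcases eq_or_ne v b with rfl | hvb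
  · rw [zc, if_neg hva, if_pos rfl, sub_zero, Real.pow_rpow_inv_natCast (hx0 v) hk]
  · exact zc_ne hva hvb

lemma zc_nonneg (hx0 : ∀ v, 0 ≤ x v) (hta : 0 ≤ x a ^ k + t) (htb : 0 ≤ x b ^ k - t)
    (v : V) : 0 ≤ zc x k a b t v := by
  rcases eq_or_ne v a with rfl | hva
  · rw [zc, if_pos rfl]; exact Real.rpow_nonneg hta _
  rcases eq_or_ne v b with rfl | hvb
  · rw [zc, if_neg hva, if_pos rfl]; exact Real.rpow_nonneg htb _
  · rw [zc_ne hva hvb]; exact hx0 v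

lemma zc_pow (hk : k ≠ 0) (hab : a ≠ b) (hta : 0 ≤ x a ^ k + t) (htb : 0 ≤ x b ^ k - t)
    (v : V) : (zc x k a b t v) ^ k
      = x v ^ k + ((if v = a then t else 0) + (if v = b then -t else 0)) := by
  rcases eq_or_ne v a with rfl | hva
  · rw [zc, if_pos rfl, Real.rpow_inv_natCast_pow hta hk, if_pos rfl,
      if_neg hab]
    ring
  rcases eq_or_ne v b with rfl | hvb
  · rw [zc, if_neg hva, if_pos rfl, Real.rpow_inv_natCast_pow htb hk, if_neg hva,
      if_pos rfl]
    ring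
  · rw [zc_ne hva hvb, if_neg hva, if_neg hvb]; ring

lemma zc_sum (hk : k ≠ 0) (hab : a ≠ b) (hta : 0 ≤ x a ^ k + t) (htb : 0 ≤ x b ^ k - t) :
    ∑ v, (zc x k a b t v) ^ k = ∑ v, x v ^ k := by
  rw [Finset.sum_congr rfl (fun v _ => zc_pow hk hab hta htb v)]
  rw [Finset.sum_add_distrib, Finset.sum_add_distrib]
  rw [Finset.sum_ite_eq' Finset.univ a (fun _ => t),
    Finset.sum_ite_eq' Finset.univ b (fun _ => -t)]
  simp

lemma zc_hasDeriv (hk : 1 ≤ k) (hxa : 0 < x a) (hxb : 0 < x b) (v : V) :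
    HasDerivAt (fun t => zc x k a b t v) (dvec x k a b v) 0 := by
  by_cases hva : v = a
  · have hpa : (0:ℝ) < x a ^ k := pow_pos hxa k
    have h1 : HasDerivAt (fun t : ℝ => x a ^ k + t) 1 0 := (hasDerivAt_id 0).const_add _
    have h2 := Real.hasDerivAt_rpow_const (x := x a ^ k + 0) (p := (k:ℝ)⁻¹)
      (Or.inl (by positivity))
    have h3 := h2.comp 0 h1
    have heq : (fun t => zc x k a b t v) = fun t : ℝ => (x a ^ k + t) ^ ((k:ℝ)⁻¹) := by
      funext t; rw [zc, if_pos hva]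
    rw [heq, dvec, if_pos hva, del]
    simpa [Function.comp_def] using h3
  by_cases hvb : v = b
  · have hpb : (0:ℝ) < x b ^ k := pow_pos hxb k
    have h1 : HasDerivAt (fun t : ℝ => x b ^ k - t) (-1) 0 := by
      exact (hasDerivAt_id 0).const_sub (x b ^ k)
    have h2 := Real.hasDerivAt_rpow_const (x := x b ^ k - 0) (p := (k:ℝ)⁻¹)
      (Or.inl (by rw [sub_zero]; positivity))
    have h3 := h2.comp 0 h1
    have heq : (fun t => zc x k a b t v) = fun t : ℝ => (x b ^ k - t) ^ ((k:ℝ)⁻¹) := by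
      funext t; rw [zc, if_neg hva, if_pos hvb]
    rw [heq, dvec, if_neg hva, if_pos hvb, del]
    have hval : (k:ℝ)⁻¹ * (x b ^ k - 0) ^ ((k:ℝ)⁻¹ - 1) * -1
        = -((k:ℝ)⁻¹ * (x b ^ k) ^ ((k:ℝ)⁻¹ - 1)) := by rw [sub_zero]; ring
    simpa [hval, Function.comp_def] using h3
  · have heq : (fun t => zc x k a b t v) = fun _ : ℝ => x v := by
      funext t; exact zc_ne hva hvb
    rw [heq, dvec, if_neg hva, if_neg hvb]
    exact hasDerivAt_const _ _


lemma sum_mul_dvec (hab : a ≠ b) (g : Finset V) (C : V → ℝ) :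
    ∑ v ∈ g, C v * dvec x k a b v
      = (if a ∈ g then C a * del x k a else 0) - (if b ∈ g then C b * del x k b else 0) := by
  have hterm : ∀ v ∈ g, C v * dvec x k a b v
      = (if v = a then C v * del x k a else 0) + (if v = b then -(C v * del x k b) else 0) := by
    intro v _
    rw [dvec]
    by_cases hva : v = a
    · rw [if_pos hva, if_pos hva, if_neg (hva ▸ hab), add_zero]
    by_cases hvb : v = b
    · rw [if_neg hva, if_pos hvb, if_neg hva, if_pos hvb, zero_add]; ring
    · rw [if_neg hva, if_neg hvb, if_neg hva, if_neg hvb]; ring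
  rw [Finset.sum_congr rfl hterm, Finset.sum_add_distrib,
    Finset.sum_ite_eq' g a (fun v => C v * del x k a),
    Finset.sum_ite_eq' g b (fun v => -(C v * del x k b))]
  split_ifs <;> ring

lemma Phi_hasDeriv (H : Hypergraph' V) {α : ℝ} (hk : 1 ≤ k) (hx : ∀ v, 0 < x v)
    (hab : a ≠ b) :
    HasDerivAt (fun t => P H k α (zc x k a b t))
      (Nv H k α x a - Nv H k α x b) 0 := by
  have hz0 : zc x k a b 0 = x := zc_zero (by omega) (fun v => (hx v).le)
  have hD : ∀ v, HasDerivAt (fun t => zc x k a b t v) (dvec x k a b v) 0 :=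
    zc_hasDeriv hk (hx a) (hx b)
  have hsum : ∀ g : Finset V,
      HasDerivAt (fun t => α * ∑ v ∈ g, (zc x k a b t v) ^ k + (1 - α) * (k:ℝ) * ∏ v ∈ g, zc x k a b t v)
        (α * (∑ v ∈ g, (k:ℝ) * x v ^ (k - 1) * dvec x k a b v)
          + (1 - α) * (k:ℝ) * (∑ v ∈ g, (∏ w ∈ g.erase v, x w) * dvec x k a b v)) 0 := by
    intro g
    have hpart1 : HasDerivAt (fun t => ∑ v ∈ g, (zc x k a b t v) ^ k)
        (∑ v ∈ g, (k:ℝ) * x v ^ (k - 1) * dvec x k a b v) 0 := by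
      apply HasDerivAt.fun_sum
      intro v _
      have h := (hD v).pow k
      rw [hz0] at h
      exact h
    have hpart2 : HasDerivAt (fun t => ∏ v ∈ g, zc x k a b t v)
        (∑ v ∈ g, (∏ w ∈ g.erase v, x w) * dvec x k a b v) 0 := by
      have h := HasDerivAt.fun_finsetProd (u := g) (f := fun v t => zc x k a b t v)
        (f' := fun v => dvec x k a b v) (fun v _ => hD v)
      simpa only [smul_eq_mul, hz0] using h
    exact (hpart1.const_mul α).add (hpart2.const_mul ((1 - α) * (k:ℝ)))
  have htotal := HasDerivAt.fun_sum (u := H.edges)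
    (A := fun g t => α * ∑ v ∈ g, (zc x k a b t v) ^ k + (1 - α) * (k:ℝ) * ∏ v ∈ g, zc x k a b t v)
    (fun g _ => hsum g)
  have hval : (∑ g ∈ H.edges,
      (α * (∑ v ∈ g, (k:ℝ) * x v ^ (k - 1) * dvec x k a b v)
        + (1 - α) * (k:ℝ) * (∑ v ∈ g, (∏ w ∈ g.erase v, x w) * dvec x k a b v)))
      = Nv H k α x a - Nv H k α x b := by
    have h1 : ∀ g ∈ H.edges, α * (∑ v ∈ g, (k:ℝ) * x v ^ (k - 1) * dvec x k a b v)
        + (1 - α) * (k:ℝ) * (∑ v ∈ g, (∏ w ∈ g.erase v, x w) * dvec x k a b v)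
        = (α * (if a ∈ g then 1 else 0)
            + (1 - α) * (k:ℝ) * ((if a ∈ g then ∏ w ∈ g.erase a, x w else 0) * del x k a))
          - (α * (if b ∈ g then 1 else 0)
            + (1 - α) * (k:ℝ) * ((if b ∈ g then ∏ w ∈ g.erase b, x w else 0) * del x k b)) := by
      intro g _
      rw [sum_mul_dvec hab, sum_mul_dvec hab]
      rw [del_spec1 hk (hx a), del_spec1 hk (hx b)]
      split_ifs <;> ring
    have eA : ∑ g ∈ H.edges, (α * (if a ∈ g then (1:ℝ) else 0)) = α * dg H a := by
      rw [dg, Finset.mul_sum]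
    have eB : ∑ g ∈ H.edges, ((1 - α) * (k:ℝ) * ((if a ∈ g then ∏ w ∈ g.erase a, x w else 0) * del x k a))
        = (1 - α) * (k:ℝ) * (Sv H x a * del x k a) := by
      rw [Sv]; simp only [Finset.sum_mul, Finset.mul_sum]
    have eC : ∑ g ∈ H.edges, (α * (if b ∈ g then (1:ℝ) else 0)) = α * dg H b := by
      rw [dg, Finset.mul_sum]
    have eD : ∑ g ∈ H.edges, ((1 - α) * (k:ℝ) * ((if b ∈ g then ∏ w ∈ g.erase b, x w else 0) * del x k b))
        = (1 - α) * (k:ℝ) * (Sv H x b * del x k b) := by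
      rw [Sv]; simp only [Finset.sum_mul, Finset.mul_sum]
    calc ∑ g ∈ H.edges,
        (α * (∑ v ∈ g, (k:ℝ) * x v ^ (k - 1) * dvec x k a b v)
          + (1 - α) * (k:ℝ) * (∑ v ∈ g, (∏ w ∈ g.erase v, x w) * dvec x k a b v))
        = ∑ g ∈ H.edges,
          ((α * (if a ∈ g then 1 else 0)
            + (1 - α) * (k:ℝ) * ((if a ∈ g then ∏ w ∈ g.erase a, x w else 0) * del x k a))
          - (α * (if b ∈ g then 1 else 0)
            + (1 - α) * (k:ℝ) * ((if b ∈ g then ∏ w ∈ g.erase b, x w else 0) * del x k b))) :=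
        Finset.sum_congr rfl h1
      _ = (∑ g ∈ H.edges, (α * (if a ∈ g then (1:ℝ) else 0))
            + ∑ g ∈ H.edges, ((1 - α) * (k:ℝ) * ((if a ∈ g then ∏ w ∈ g.erase a, x w else 0) * del x k a)))
          - (∑ g ∈ H.edges, (α * (if b ∈ g then (1:ℝ) else 0))
            + ∑ g ∈ H.edges, ((1 - α) * (k:ℝ) * ((if b ∈ g then ∏ w ∈ g.erase b, x w else 0) * del x k b))) := by
        rw [Finset.sum_sub_distrib, Finset.sum_add_distrib, Finset.sum_add_distrib]
      _ = Nv H k α x a - Nv H k α x b := by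
        rw [eA, eB, eC, eD, Nv, Nv]; ring
  rw [hval] at htotal
  show HasDerivAt (fun t => ∑ g ∈ H.edges,
    (α * ∑ v ∈ g, (zc x k a b t v) ^ k + (1 - α) * (k:ℝ) * ∏ v ∈ g, zc x k a b t v))
    (Nv H k α x a - Nv H k α x b) 0
  exact htotal

end Curve

lemma sum_sum_mem (E : Finset (Finset V)) (F : V → Finset V → ℝ) :
    ∑ g ∈ E, ∑ v ∈ g, F v g = ∑ v, ∑ g ∈ E, (if v ∈ g then F v g else 0) := by
  have h1 : ∀ g ∈ E, ∑ v ∈ g, F v g = ∑ v, (if v ∈ g then F v g else 0) := by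
    intro g _
    rw [Finset.sum_ite_mem, Finset.univ_inter]
  rw [Finset.sum_congr rfl h1, Finset.sum_comm]

lemma localmax_of_perron {k : ℕ} {α : ℝ} {x : V → ℝ} {a b : V}
    (hk : 2 ≤ k) (hα0 : 0 ≤ α) (hα1 : α ≤ 1) (hab : a ≠ b)
    (hpos : ∀ v, 0 < x v) (hsum1 : (∑ v, x v ^ k) = 1)
    {H : Hypergraph' V} (hmax : P H k α x = H.aspec k α) :
    IsLocalMax (fun t => P H k α (zc x k a b t)) 0 := by
  have hka : (0:ℝ) < x a ^ k := pow_pos (hpos a) k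
  have hkb : (0:ℝ) < x b ^ k := pow_pos (hpos b) k
  have hεpos : 0 < min (x a ^ k) (x b ^ k) := lt_min hka hkb
  have hmem : Set.Ioo (-(min (x a ^ k) (x b ^ k))) (min (x a ^ k) (x b ^ k)) ∈ nhds (0:ℝ) :=
    isOpen_Ioo.mem_nhds ⟨by linarith, hεpos⟩
  filter_upwards [hmem] with t ht
  have hta : 0 ≤ x a ^ k + t := by
    have := min_le_left (x a ^ k) (x b ^ k); have := ht.1; linarith
  have htb : 0 ≤ x b ^ k - t := by
    have := min_le_right (x a ^ k) (x b ^ k); have := ht.2; linarith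
  have h0 := zc_nonneg (fun v => (hpos v).le) hta htb
  have h1 : ∑ v, (zc x k a b t v) ^ k = 1 := by
    rw [zc_sum (by omega) hab hta htb, hsum1]
  have hle : P H k α (zc x k a b t) ≤ H.aspec k α :=
    P_le_aspec (by omega) hα0 hα1 h0 h1
  have h2 : zc x k a b 0 = x := zc_zero (by omega) (fun v => (hpos v).le)
  simpa [h2, hmax] using hle

lemma Nv_eq_aspec {G : Hypergraph' V} {k : ℕ} {α : ℝ} {x : V → ℝ}
    (hk : 2 ≤ k) (hα0 : 0 ≤ α) (hα1 : α ≤ 1) (hGu : G.Uniform k)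
    (hx : G.IsPerron k α x) : ∀ v, Nv G k α x v = G.aspec k α := by
  obtain ⟨hpos, hsum1, hPmax⟩ := hx
  have hPmax' : P G k α x = G.aspec k α := hPmax
  -- pairwise equal
  have hpair : ∀ a b : V, a ≠ b → Nv G k α x a = Nv G k α x b := by
    intro a b hab
    have hlm := localmax_of_perron hk hα0 hα1 hab hpos hsum1 hPmax'
    have hd := Phi_hasDeriv (x := x) (a := a) (b := b) (α := α) G (Nat.one_le_of_lt hk) hpos hab
    have h0 := hlm.deriv_eq_zero
    rw [hd.deriv] at h0
    linarith [h0]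
  have hconst : ∀ v w : V, Nv G k α x v = Nv G k α x w := by
    intro v w
    rcases eq_or_ne v w with rfl | h
    · rfl
    · exact hpair v w h
  -- the weighted sum of Nv equals P G x
  have hsumN : ∑ v, x v ^ k * Nv G k α x v = P G k α x := by
    have hA : ∑ v, x v ^ k * dg G v = ∑ g ∈ G.edges, ∑ v ∈ g, x v ^ k := by
      rw [sum_sum_mem G.edges (fun v _ => x v ^ k)]
      refine Finset.sum_congr rfl fun v _ => ?_
      rw [dg, Finset.mul_sum]
      refine Finset.sum_congr rfl fun g _ => ?_
      split_ifs <;> ring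
    have hB : ∑ v, x v * Sv G x v = ∑ g ∈ G.edges, (k:ℝ) * ∏ w ∈ g, x w := by
      have h1 : ∑ v, x v * Sv G x v
          = ∑ v, ∑ g ∈ G.edges, (if v ∈ g then x v * ∏ w ∈ g.erase v, x w else 0) := by
        refine Finset.sum_congr rfl fun v _ => ?_
        rw [Sv, Finset.mul_sum]
        refine Finset.sum_congr rfl fun g _ => ?_
        split_ifs <;> ring
      rw [h1, ← sum_sum_mem G.edges (fun v g => x v * ∏ w ∈ g.erase v, x w)]
      refine Finset.sum_congr rfl fun g hg => ?_
      have h2 : ∀ v ∈ g, x v * ∏ w ∈ g.erase v, x w = ∏ w ∈ g, x w := by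
        intro v hv
        exact Finset.mul_prod_erase g x hv
      rw [Finset.sum_congr rfl h2, Finset.sum_const, nsmul_eq_mul, hGu g hg]
    have hterm : ∀ v, x v ^ k * Nv G k α x v
        = α * (x v ^ k * dg G v) + (1 - α) * (x v * Sv G x v) := by
      intro v
      rw [Nv]
      have h3 : x v ^ k * ((k:ℝ) * del x k v) = x v := del_spec2 (by omega) (hpos v)
      calc x v ^ k * (α * dg G v + (1 - α) * (k:ℝ) * (del x k v * Sv G x v))
          = α * (x v ^ k * dg G v)
            + (1 - α) * ((x v ^ k * ((k:ℝ) * del x k v)) * Sv G x v) := by ring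
        _ = α * (x v ^ k * dg G v) + (1 - α) * (x v * Sv G x v) := by rw [h3]
    rw [Finset.sum_congr rfl (fun v _ => hterm v), Finset.sum_add_distrib,
      ← Finset.mul_sum, ← Finset.mul_sum, hA, hB, P]
    rw [Finset.sum_add_distrib]
    congr 1
    · rw [Finset.mul_sum]
    · rw [Finset.mul_sum]
      exact Finset.sum_congr rfl fun g _ => by ring
  intro u
  have h4 : ∑ v, x v ^ k * Nv G k α x v = Nv G k α x u := by
    have h5 : ∀ v ∈ (Finset.univ : Finset V), x v ^ k * Nv G k α x v
        = x v ^ k * Nv G k α x u := fun v _ => by rw [hconst v u]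
    rw [Finset.sum_congr rfl h5, ← Finset.sum_mul, hsum1, one_mul]
  rw [← h4, hsumN, hPmax']


lemma P_le_of_eigen {H : Hypergraph' V} {k : ℕ} {α : ℝ} {x : V → ℝ} {ρ : ℝ}
    (hk : 2 ≤ k) (hα1 : α ≤ 1)
    (hH : ∀ g ∈ H.edges, g.card = k) (hpos : ∀ v, 0 < x v)
    (hN : ∀ v, Nv H k α x v = ρ)
    {y : V → ℝ} (hy0 : ∀ v, 0 ≤ y v) (hy1 : (∑ v, y v ^ k) = 1) :
    P H k α y ≤ ρ := by
  have hkne : k ≠ 0 := by omega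
  have hkR : (0:ℝ) < (k:ℝ) := by positivity
  have hquot : ∀ v, (y v / x v) ^ k * x v = y v ^ k * ((k:ℝ) * del x k v) := by
    intro v
    have h2 := del_spec2 (k := k) (x := x) (by omega) (hpos v)
    have hxk : (0:ℝ) < x v ^ k := pow_pos (hpos v) k
    have hd : (k:ℝ) * del x k v = x v / x v ^ k := by
      rw [eq_div_iff (ne_of_gt hxk), mul_comm ((k:ℝ) * del x k v) (x v ^ k)]
      exact h2
    rw [div_pow, hd]
    field_simp
  have per_edge : ∀ g ∈ H.edges,
      α * ∑ v ∈ g, y v ^ k + (1 - α) * (k:ℝ) * ∏ v ∈ g, y v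
      ≤ ∑ v ∈ g, (α * y v ^ k + (1 - α) * ((y v / x v) ^ k * ∏ w ∈ g, x w)) := by
    intro g hg
    have hgm : ∏ v ∈ g, (y v / x v) ≤ (k:ℝ)⁻¹ * ∑ v ∈ g, (y v / x v) ^ k := by
      have hw : ∀ i ∈ g, (0:ℝ) ≤ (k:ℝ)⁻¹ := fun i _ => by positivity
      have hw' : ∑ _i ∈ g, (k:ℝ)⁻¹ = 1 := by
        rw [Finset.sum_const, hH g hg, nsmul_eq_mul, mul_inv_cancel₀ (ne_of_gt hkR)]
      have hz : ∀ i ∈ g, (0:ℝ) ≤ (y i / x i) ^ k :=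
        fun i _ => pow_nonneg (div_nonneg (hy0 i) (hpos i).le) k
      have h := Real.geom_mean_le_arith_mean_weighted g (fun _ => (k:ℝ)⁻¹)
        (fun v => (y v / x v) ^ k) hw hw' hz
      have hL : ∏ v ∈ g, ((y v / x v) ^ k) ^ ((k:ℝ)⁻¹) = ∏ v ∈ g, (y v / x v) :=
        Finset.prod_congr rfl fun v _ =>
          Real.pow_rpow_inv_natCast (div_nonneg (hy0 v) (hpos v).le) hkne
      rw [hL] at h
      calc ∏ v ∈ g, (y v / x v) ≤ ∑ v ∈ g, (k:ℝ)⁻¹ * (y v / x v) ^ k := h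
        _ = (k:ℝ)⁻¹ * ∑ v ∈ g, (y v / x v) ^ k := by rw [Finset.mul_sum]
    have hpx : (0:ℝ) < ∏ w ∈ g, x w := Finset.prod_pos (fun w _ => hpos w)
    have hprod : ∏ v ∈ g, y v = (∏ v ∈ g, (y v / x v)) * ∏ w ∈ g, x w := by
      rw [Finset.prod_div_distrib, div_mul_cancel₀]
      exact ne_of_gt hpx
    have hkey : (k:ℝ) * ∏ v ∈ g, y v ≤ (∑ v ∈ g, (y v / x v) ^ k) * ∏ w ∈ g, x w := by
      rw [hprod, ← mul_assoc]
      apply mul_le_mul_of_nonneg_right _ hpx.le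
      calc (k:ℝ) * ∏ v ∈ g, (y v / x v) ≤ (k:ℝ) * ((k:ℝ)⁻¹ * ∑ v ∈ g, (y v / x v) ^ k) :=
            mul_le_mul_of_nonneg_left hgm hkR.le
        _ = ∑ v ∈ g, (y v / x v) ^ k := by
            rw [← mul_assoc, mul_inv_cancel₀ (ne_of_gt hkR), one_mul]
    have hsplit : ∑ v ∈ g, (α * y v ^ k + (1 - α) * ((y v / x v) ^ k * ∏ w ∈ g, x w))
        = α * ∑ v ∈ g, y v ^ k
          + (1 - α) * ((∑ v ∈ g, (y v / x v) ^ k) * ∏ w ∈ g, x w) := by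
      rw [Finset.sum_add_distrib, ← Finset.mul_sum]
      congr 1
      rw [Finset.sum_mul, Finset.mul_sum]
    rw [hsplit]
    have h1α : (0:ℝ) ≤ 1 - α := by linarith
    have := mul_le_mul_of_nonneg_left hkey h1α
    calc α * ∑ v ∈ g, y v ^ k + (1 - α) * (k:ℝ) * ∏ v ∈ g, y v
        = α * ∑ v ∈ g, y v ^ k + (1 - α) * ((k:ℝ) * ∏ v ∈ g, y v) := by ring
      _ ≤ α * ∑ v ∈ g, y v ^ k + (1 - α) * ((∑ v ∈ g, (y v / x v) ^ k) * ∏ w ∈ g, x w) := by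
          linarith
  calc P H k α y
      ≤ ∑ g ∈ H.edges, ∑ v ∈ g, (α * y v ^ k + (1 - α) * ((y v / x v) ^ k * ∏ w ∈ g, x w)) :=
        Finset.sum_le_sum per_edge
    _ = ∑ v, ∑ g ∈ H.edges,
        (if v ∈ g then α * y v ^ k + (1 - α) * ((y v / x v) ^ k * ∏ w ∈ g, x w) else 0) :=
        sum_sum_mem _ _
    _ = ∑ v, y v ^ k * Nv H k α x v := by
        refine Finset.sum_congr rfl fun v _ => ?_
        have hsplit2 : ∀ g ∈ H.edges,
            (if v ∈ g then α * y v ^ k + (1 - α) * ((y v / x v) ^ k * ∏ w ∈ g, x w) else 0)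
            = α * y v ^ k * (if v ∈ g then 1 else 0)
              + (1 - α) * (y v / x v) ^ k
                * (x v * (if v ∈ g then ∏ w ∈ g.erase v, x w else 0)) := by
          intro g _
          by_cases hvg : v ∈ g
          · rw [if_pos hvg, if_pos hvg, if_pos hvg, ← Finset.mul_prod_erase g x hvg]
            ring
          · rw [if_neg hvg, if_neg hvg, if_neg hvg]; ring
        rw [Finset.sum_congr rfl hsplit2, Finset.sum_add_distrib, ← Finset.mul_sum,
          ← Finset.mul_sum, ← Finset.mul_sum, ← dg, ← Sv]
        have h3 := hquot v
        rw [Nv]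
        calc α * y v ^ k * dg H v + (1 - α) * (y v / x v) ^ k * (x v * Sv H x v)
            = α * y v ^ k * dg H v + (1 - α) * ((y v / x v) ^ k * x v) * Sv H x v := by ring
          _ = α * y v ^ k * dg H v + (1 - α) * (y v ^ k * ((k:ℝ) * del x k v)) * Sv H x v := by
              rw [h3]
          _ = y v ^ k * (α * dg H v + (1 - α) * (k:ℝ) * (del x k v * Sv H x v)) := by ring
    _ = ∑ v, y v ^ k * ρ := by
        exact Finset.sum_congr rfl fun v _ => by rw [hN v]
    _ = ρ := by rw [← Finset.sum_mul, hy1, one_mul]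


lemma sum_switch {E : Finset (Finset V)} {e f e' f' : Finset V}
    (he : e ∈ E) (hf : f ∈ E) (hef : e ≠ f) (he' : e' ∉ E) (hf' : f' ∉ E)
    (he'f' : e' ≠ f') (c : Finset V → ℝ) :
    ∑ g ∈ (E \ {e, f}) ∪ {e', f'}, c g = ∑ g ∈ E, c g - c e - c f + c e' + c f' := by
  have hdisj : Disjoint (E \ {e, f}) {e', f'} := by
    rw [Finset.disjoint_right]
    intro g hg hmem
    have hgE := (Finset.mem_sdiff.mp hmem).1
    rcases Finset.mem_insert.mp hg with rfl | hg'
    · exact he' hgE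
    · rw [Finset.mem_singleton] at hg'; subst hg'; exact hf' hgE
  have hsub : {e, f} ⊆ E := by
    intro g hg
    rcases Finset.mem_insert.mp hg with rfl | hg'
    · exact he
    · rw [Finset.mem_singleton] at hg'; subst hg'; exact hf
  rw [Finset.sum_union hdisj, Finset.sum_sdiff_eq_sub hsub,
    Finset.sum_pair hef, Finset.sum_pair he'f']
  ring

lemma prod_union_erase_left {A B : Finset V} (hd : Disjoint A B) {v : V} (hv : v ∈ A)
    (x : V → ℝ) :
    ∏ w ∈ (A ∪ B).erase v, x w = (∏ w ∈ A.erase v, x w) * ∏ w ∈ B, x w := by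
  rw [Finset.erase_union_distrib,
    Finset.erase_eq_of_notMem (Finset.disjoint_left.mp hd hv)]
  exact Finset.prod_union (Finset.disjoint_of_subset_left (Finset.erase_subset _ _) hd)

lemma prod_union_erase_right {A B : Finset V} (hd : Disjoint A B) {v : V} (hv : v ∈ B)
    (x : V → ℝ) :
    ∏ w ∈ (A ∪ B).erase v, x w = (∏ w ∈ A, x w) * ∏ w ∈ B.erase v, x w := by
  rw [Finset.erase_union_distrib,
    Finset.erase_eq_of_notMem (Finset.disjoint_right.mp hd hv)]
  exact Finset.prod_union (Finset.disjoint_of_subset_right (Finset.erase_subset _ _) hd)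


lemma ind_union {A B : Finset V} (hd : Disjoint A B) (v : V) :
    (if v ∈ A ∪ B then (1:ℝ) else 0)
      = (if v ∈ A then (1:ℝ) else 0) + (if v ∈ B then (1:ℝ) else 0) := by
  by_cases hA : v ∈ A
  · rw [if_pos (Finset.mem_union_left _ hA), if_pos hA,
      if_neg (Finset.disjoint_left.mp hd hA), add_zero]
  by_cases hB : v ∈ B
  · rw [if_pos (Finset.mem_union_right _ hB), if_neg hA, if_pos hB, zero_add]
  · rw [if_neg (fun h => (Finset.mem_union.mp h).elim hA hB), if_neg hA, if_neg hB,
      add_zero]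

lemma contrib_union {A B : Finset V} (hd : Disjoint A B) (x : V → ℝ) (v : V) :
    (if v ∈ A ∪ B then ∏ w ∈ (A ∪ B).erase v, x w else 0)
      = (if v ∈ A then (∏ w ∈ A.erase v, x w) * ∏ w ∈ B, x w else 0)
        + (if v ∈ B then (∏ w ∈ A, x w) * ∏ w ∈ B.erase v, x w else 0) := by
  by_cases hA : v ∈ A
  · rw [if_pos (Finset.mem_union_left _ hA), if_pos hA,
      if_neg (Finset.disjoint_left.mp hd hA), prod_union_erase_left hd hA, add_zero]
  by_cases hB : v ∈ B
  · rw [if_pos (Finset.mem_union_right _ hB), if_neg hA, if_pos hB,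
      prod_union_erase_right hd hB, zero_add]
  · rw [if_neg (fun h => (Finset.mem_union.mp h).elim hA hB), if_neg hA, if_neg hB,
      add_zero]

end TwoSwitch

open TwoSwitch

/-- 2-switching lemma: with `e, f ∈ E(G)`, `U₁ ⊆ e`, `V₁ ⊆ f` of size
`r` (`1 ≤ r < k`), `U₂ = e∖U₁`, `V₂ = f∖V₁`, and `e' = U₁ ∪ V₂`, `f' = V₁ ∪ U₂`
`k`-sets not in `E(G)`, if `G'` is obtained from `G` by the 2-switching and the
`α`-Perron vector `x` of `G` satisfies `x_{U₁} ≥ x_{V₁}` and `x_{U₂} ≤ x_{V₂}`,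
then `ρ_α(G') ≥ ρ_α(G)`, with equality iff `x_{U₁} = x_{V₁}` and `x_{U₂} = x_{V₂}`. -/
theorem aspec_le_of_two_switching (k : ℕ) (hk : 2 ≤ k)
    {V : Type} [Fintype V] [DecidableEq V] (G G' : Hypergraph' V)
    (hGu : G.Uniform k) (hGc : G.Connected)
    (e f : Finset V) (he : e ∈ G.edges) (hf : f ∈ G.edges)
    (r : ℕ) (hr1 : 1 ≤ r) (hrk : r < k)
    (U₁ V₁ : Finset V) (hU₁ : U₁ ⊆ e) (hV₁ : V₁ ⊆ f)
    (hU₁c : U₁.card = r) (hV₁c : V₁.card = r)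
    (he'c : (U₁ ∪ (f \ V₁)).card = k) (hf'c : (V₁ ∪ (e \ U₁)).card = k)
    (he'new : U₁ ∪ (f \ V₁) ∉ G.edges) (hf'new : V₁ ∪ (e \ U₁) ∉ G.edges)
    (hG' : G'.edges = (G.edges \ {e, f}) ∪ {U₁ ∪ (f \ V₁), V₁ ∪ (e \ U₁)})
    (α : ℝ) (hα0 : 0 ≤ α) (hα1 : α < 1)
    (x : V → ℝ) (hx : G.IsPerron k α x)
    (h1 : ∏ w ∈ V₁, x w ≤ ∏ w ∈ U₁, x w)
    (h2 : ∏ w ∈ e \ U₁, x w ≤ ∏ w ∈ f \ V₁, x w) :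
    G.aspec k α ≤ G'.aspec k α ∧
      (G.aspec k α = G'.aspec k α ↔
        (∏ w ∈ U₁, x w = ∏ w ∈ V₁, x w ∧
          ∏ w ∈ e \ U₁, x w = ∏ w ∈ f \ V₁, x w)) := by
  classical
  obtain ⟨hpos, hsum1, hPsum⟩ := hx
  have hx' : G.IsPerron k α x := ⟨hpos, hsum1, hPsum⟩
  have hPx : TwoSwitch.P G k α x = G.aspec k α := hPsum
  have hk1 : 1 ≤ k := by omega
  have hα1' : α ≤ 1 := le_of_lt hα1
  have hfeasx0 : ∀ v, 0 ≤ x v := fun v => (hpos v).le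
  have hec : e.card = k := hGu e he
  have hfc : f.card = k := hGu f hf
  have hU₂c : (e \ U₁).card = k - r := by rw [Finset.card_sdiff_of_subset hU₁, hec, hU₁c]
  have hV₂c : (f \ V₁).card = k - r := by rw [Finset.card_sdiff_of_subset hV₁, hfc, hV₁c]
  have hdU₁V₂ : Disjoint U₁ (f \ V₁) := by
    have hcount := Finset.card_union_add_card_inter U₁ (f \ V₁)
    rw [he'c, hU₁c, hV₂c] at hcount
    have h3 : (U₁ ∩ (f \ V₁)).card = 0 := by omega
    rw [Finset.card_eq_zero] at h3
    exact Finset.disjoint_iff_inter_eq_empty.mpr h3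
  have hdV₁U₂ : Disjoint V₁ (e \ U₁) := by
    have hcount := Finset.card_union_add_card_inter V₁ (e \ U₁)
    rw [hf'c, hV₁c, hU₂c] at hcount
    have h3 : (V₁ ∩ (e \ U₁)).card = 0 := by omega
    rw [Finset.card_eq_zero] at h3
    exact Finset.disjoint_iff_inter_eq_empty.mpr h3
  have hdU₁U₂ : Disjoint U₁ (e \ U₁) := Finset.disjoint_sdiff
  have hdV₁V₂ : Disjoint V₁ (f \ V₁) := Finset.disjoint_sdiff
  have heU : U₁ ∪ (e \ U₁) = e := Finset.union_sdiff_of_subset hU₁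
  have hfV : V₁ ∪ (f \ V₁) = f := Finset.union_sdiff_of_subset hV₁
  have hU₁V₁ : U₁ ≠ V₁ := by
    intro h
    apply he'new
    have h3 : U₁ ∪ (f \ V₁) = f := by rw [h]; exact hfV
    rw [h3]; exact hf
  have hU₂V₂ : (e \ U₁) ≠ (f \ V₁) := by
    intro h
    apply hf'new
    have h3 : V₁ ∪ (e \ U₁) = f := by rw [h]; exact hfV
    rw [h3]; exact hf
  have hef : e ≠ f := by
    intro h
    apply hU₁V₁
    have hsub : U₁ ⊆ V₁ := by
      intro u hu
      have huf : u ∈ f := h ▸ hU₁ hu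
      have h4 : u ∉ f \ V₁ := Finset.disjoint_left.mp hdU₁V₂ hu
      rw [Finset.mem_sdiff] at h4
      push_neg at h4
      exact h4 huf
    exact Finset.eq_of_subset_of_card_le hsub (by rw [hU₁c, hV₁c])
  have he'f' : (U₁ ∪ (f \ V₁)) ≠ (V₁ ∪ (e \ U₁)) := by
    intro h
    apply hU₁V₁
    have hsub : U₁ ⊆ V₁ := by
      intro u hu
      have h2' : u ∈ V₁ ∪ (e \ U₁) := h ▸ Finset.mem_union_left _ hu
      rcases Finset.mem_union.mp h2' with h3 | h3
      · exact h3
      · exact absurd hu (Finset.mem_sdiff.mp h3).2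
    exact Finset.eq_of_subset_of_card_le hsub (by rw [hU₁c, hV₁c])
  have huniform' : ∀ g ∈ G'.edges, g.card = k := by
    intro g hg
    rw [hG'] at hg
    rcases Finset.mem_union.mp hg with h3 | h3
    · exact hGu g (Finset.mem_sdiff.mp h3).1
    · rcases Finset.mem_insert.mp h3 with rfl | h4
      · exact he'c
      · rw [Finset.mem_singleton] at h4; subst h4; exact hf'c
  -- the switching identity
  have hswitch : ∀ z : V → ℝ, TwoSwitch.P G' k α z = TwoSwitch.P G k α z
      + (1 - α) * (k:ℝ) * ((∏ w ∈ U₁, z w - ∏ w ∈ V₁, z w)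
          * (∏ w ∈ f \ V₁, z w - ∏ w ∈ e \ U₁, z w)) := by
    intro z
    have h5 : TwoSwitch.P G' k α z
        = ∑ g ∈ (G.edges \ {e, f}) ∪ {U₁ ∪ (f \ V₁), V₁ ∪ (e \ U₁)},
          (α * ∑ v ∈ g, z v ^ k + (1 - α) * (k:ℝ) * ∏ v ∈ g, z v) := by
      rw [TwoSwitch.P, hG']
    rw [h5, TwoSwitch.sum_switch he hf hef he'new hf'new he'f']
    have hse : ∑ v ∈ e, z v ^ k = ∑ v ∈ U₁, z v ^ k + ∑ v ∈ e \ U₁, z v ^ k := by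
      have h6 := Finset.sum_union (f := fun v => z v ^ k) hdU₁U₂
      rw [heU] at h6; exact h6
    have hsf : ∑ v ∈ f, z v ^ k = ∑ v ∈ V₁, z v ^ k + ∑ v ∈ f \ V₁, z v ^ k := by
      have h6 := Finset.sum_union (f := fun v => z v ^ k) hdV₁V₂
      rw [hfV] at h6; exact h6
    have hpe : ∏ v ∈ e, z v = (∏ v ∈ U₁, z v) * ∏ v ∈ e \ U₁, z v := by
      have h6 := Finset.prod_union (f := fun v => z v) hdU₁U₂
      rw [heU] at h6; exact h6
    have hpf : ∏ v ∈ f, z v = (∏ v ∈ V₁, z v) * ∏ v ∈ f \ V₁, z v := by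
      have h6 := Finset.prod_union (f := fun v => z v) hdV₁V₂
      rw [hfV] at h6; exact h6
    have hse' := Finset.sum_union (f := fun v => z v ^ k) hdU₁V₂
    have hsf' := Finset.sum_union (f := fun v => z v ^ k) hdV₁U₂
    have hpe' := Finset.prod_union (f := fun v => z v) hdU₁V₂
    have hpf' := Finset.prod_union (f := fun v => z v) hdV₁U₂
    rw [TwoSwitch.P, hse, hsf, hpe, hpf, hse', hsf', hpe', hpf']
    ring
  -- part 1
  have hPG'x_le : TwoSwitch.P G' k α x ≤ G'.aspec k α :=
    P_le_aspec hk1 hα0 hα1' hfeasx0 hsum1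
  have hcpos : (0:ℝ) < (1 - α) * (k:ℝ) := mul_pos (by linarith) (by positivity)
  have hΔ₁ : 0 ≤ ∏ w ∈ U₁, x w - ∏ w ∈ V₁, x w := sub_nonneg.mpr h1
  have hΔ₂ : 0 ≤ ∏ w ∈ f \ V₁, x w - ∏ w ∈ e \ U₁, x w := sub_nonneg.mpr h2
  have hle : G.aspec k α ≤ G'.aspec k α := by
    have h5 := hswitch x
    have h6 : 0 ≤ (1 - α) * (k:ℝ) * ((∏ w ∈ U₁, x w - ∏ w ∈ V₁, x w)
        * (∏ w ∈ f \ V₁, x w - ∏ w ∈ e \ U₁, x w)) :=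
      mul_nonneg hcpos.le (mul_nonneg hΔ₁ hΔ₂)
    rw [← hPx]
    linarith
  -- the curve-based contradiction machine
  have key : ∀ (a b : V) (A B : Finset V) (Δ : ℝ), a ≠ b → a ∈ A → b ∈ B → a ∉ B →
      b ∉ A → 0 < Δ →
      (∀ t : ℝ, TwoSwitch.P G' k α (zc x k a b t) = TwoSwitch.P G k α (zc x k a b t)
        + (1 - α) * (k:ℝ) * (Δ * (∏ w ∈ A, zc x k a b t w - ∏ w ∈ B, zc x k a b t w))) →
      TwoSwitch.P G' k α x = G'.aspec k α → False := by
    intro a b A B Δ hab haA hbB haB hbA hΔ hψeq hPG'x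
    have hz0 : zc x k a b 0 = x := zc_zero (by omega) hfeasx0
    have hD := zc_hasDeriv (a := a) (b := b) hk1 (hpos a) (hpos b)
    have hprodA : HasDerivAt (fun t => ∏ w ∈ A, zc x k a b t w)
        (∑ v ∈ A, (∏ w ∈ A.erase v, x w) * dvec x k a b v) 0 := by
      have h := HasDerivAt.fun_finsetProd (u := A) (f := fun v t => zc x k a b t v)
        (f' := fun v => dvec x k a b v) (fun v _ => hD v)
      simpa only [smul_eq_mul, hz0] using h
    have hprodB : HasDerivAt (fun t => ∏ w ∈ B, zc x k a b t w)
        (∑ v ∈ B, (∏ w ∈ B.erase v, x w) * dvec x k a b v) 0 := by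
      have h := HasDerivAt.fun_finsetProd (u := B) (f := fun v t => zc x k a b t v)
        (f' := fun v => dvec x k a b v) (fun v _ => hD v)
      simpa only [smul_eq_mul, hz0] using h
    have hvalA : ∑ v ∈ A, (∏ w ∈ A.erase v, x w) * dvec x k a b v
        = (∏ w ∈ A.erase a, x w) * del x k a := by
      rw [sum_mul_dvec hab, if_pos haA, if_neg hbA, sub_zero]
    have hvalB : ∑ v ∈ B, (∏ w ∈ B.erase v, x w) * dvec x k a b v
        = -((∏ w ∈ B.erase b, x w) * del x k b) := by
      rw [sum_mul_dvec hab, if_neg haB, if_pos hbB, zero_sub]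
    have hψd : HasDerivAt
        (fun t => ∏ w ∈ A, zc x k a b t w - ∏ w ∈ B, zc x k a b t w)
        ((∏ w ∈ A.erase a, x w) * del x k a + (∏ w ∈ B.erase b, x w) * del x k b) 0 := by
      have h := hprodA.sub hprodB
      rw [hvalA, hvalB, sub_neg_eq_add] at h
      exact h
    have hNc := Nv_eq_aspec hk hα0 hα1' hGu hx'
    have hΦG : HasDerivAt (fun t => TwoSwitch.P G k α (zc x k a b t)) 0 0 := by
      have h := Phi_hasDeriv (α := α) (a := a) (b := b) G hk1 hpos hab
      rw [hNc a, hNc b, sub_self] at h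
      exact h
    have hΦG' : HasDerivAt (fun t => TwoSwitch.P G' k α (zc x k a b t))
        (0 + (1 - α) * (k:ℝ) * (Δ * ((∏ w ∈ A.erase a, x w) * del x k a
          + (∏ w ∈ B.erase b, x w) * del x k b))) 0 := by
      have heqf : (fun t => TwoSwitch.P G' k α (zc x k a b t))
          = fun t => TwoSwitch.P G k α (zc x k a b t)
            + (1 - α) * (k:ℝ) * (Δ * (∏ w ∈ A, zc x k a b t w - ∏ w ∈ B, zc x k a b t w)) :=
        funext hψeq
      rw [heqf]
      exact hΦG.add ((hψd.const_mul Δ).const_mul ((1 - α) * (k:ℝ)))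
    have hlm := localmax_of_perron hk hα0 hα1' hab hpos hsum1 (H := G') hPG'x
    have h0 := hlm.deriv_eq_zero
    rw [hΦG'.deriv] at h0
    have hposd : 0 < (∏ w ∈ A.erase a, x w) * del x k a
        + (∏ w ∈ B.erase b, x w) * del x k b :=
      add_pos (mul_pos (Finset.prod_pos fun w _ => hpos w) (del_pos hk1 (hpos a)))
        (mul_pos (Finset.prod_pos fun w _ => hpos w) (del_pos hk1 (hpos b)))
    have hcontra := mul_pos hcpos (mul_pos hΔ hposd)
    linarith
  refine ⟨hle, ?_, ?_⟩
  · -- equality implies products equal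
    intro hEq
    have hprod0 : (∏ w ∈ U₁, x w - ∏ w ∈ V₁, x w)
        * (∏ w ∈ f \ V₁, x w - ∏ w ∈ e \ U₁, x w) = 0 := by
      have h5 := hswitch x
      rw [hPx] at h5
      have h6 : TwoSwitch.P G' k α x ≤ G.aspec k α := by rw [hEq]; exact hPG'x_le
      have h7 : (1 - α) * (k:ℝ) * ((∏ w ∈ U₁, x w - ∏ w ∈ V₁, x w)
          * (∏ w ∈ f \ V₁, x w - ∏ w ∈ e \ U₁, x w)) ≤ 0 := by linarith
      have h8 := mul_nonneg hΔ₁ hΔ₂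
      nlinarith
    have hPG'x : TwoSwitch.P G' k α x = G'.aspec k α := by
      rw [hswitch x, hprod0, mul_zero, add_zero, hPx, hEq]
    have claimA : ∏ w ∈ U₁, x w = ∏ w ∈ V₁, x w := by
      by_contra hne
      have hΔ₁pos : 0 < ∏ w ∈ U₁, x w - ∏ w ∈ V₁, x w :=
        hΔ₁.lt_of_ne (Ne.symm (sub_ne_zero_of_ne hne))
      obtain ⟨a, ha⟩ : ((f \ V₁) \ (e \ U₁)).Nonempty := by
        rw [Finset.sdiff_nonempty]
        intro hsub
        exact hU₂V₂ ((Finset.eq_of_subset_of_card_le hsub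
          (le_of_eq (by rw [hU₂c, hV₂c]))).symm)
      obtain ⟨b, hb⟩ : ((e \ U₁) \ (f \ V₁)).Nonempty := by
        rw [Finset.sdiff_nonempty]
        intro hsub
        exact hU₂V₂ (Finset.eq_of_subset_of_card_le hsub
          (le_of_eq (by rw [hU₂c, hV₂c])))
      have haV₂ : a ∈ f \ V₁ := (Finset.mem_sdiff.mp ha).1
      have haU₂ : a ∉ e \ U₁ := (Finset.mem_sdiff.mp ha).2
      have haU₁ : a ∉ U₁ := Finset.disjoint_right.mp hdU₁V₂ haV₂
      have hbU₂ : b ∈ e \ U₁ := (Finset.mem_sdiff.mp hb).1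
      have hbV₂ : b ∉ f \ V₁ := (Finset.mem_sdiff.mp hb).2
      have hbU₁ : b ∉ U₁ := (Finset.mem_sdiff.mp hbU₂).2
      have hbV₁ : b ∉ V₁ := Finset.disjoint_right.mp hdV₁U₂ hbU₂
      have haV₁ : a ∉ V₁ := (Finset.mem_sdiff.mp haV₂).2
      have hab : a ≠ b := fun h => haU₂ (h ▸ hbU₂)
      refine key a b (f \ V₁) (e \ U₁) (∏ w ∈ U₁, x w - ∏ w ∈ V₁, x w)
        hab haV₂ hbU₂ haU₂ hbV₂ hΔ₁pos ?_ hPG'x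
      intro t
      rw [hswitch (zc x k a b t)]
      have hcU₁ : ∏ w ∈ U₁, zc x k a b t w = ∏ w ∈ U₁, x w :=
        Finset.prod_congr rfl fun w hw =>
          zc_ne (fun h => haU₁ (h ▸ hw)) (fun h => hbU₁ (h ▸ hw))
      have hcV₁ : ∏ w ∈ V₁, zc x k a b t w = ∏ w ∈ V₁, x w :=
        Finset.prod_congr rfl fun w hw =>
          zc_ne (fun h => haV₁ (h ▸ hw)) (fun h => hbV₁ (h ▸ hw))
      rw [hcU₁, hcV₁]
    have claimB : ∏ w ∈ e \ U₁, x w = ∏ w ∈ f \ V₁, x w := by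
      by_contra hne
      have hΔ₂pos : 0 < ∏ w ∈ f \ V₁, x w - ∏ w ∈ e \ U₁, x w :=
        hΔ₂.lt_of_ne (Ne.symm (sub_ne_zero_of_ne (Ne.symm hne)))
      obtain ⟨a, ha⟩ : (U₁ \ V₁).Nonempty := by
        rw [Finset.sdiff_nonempty]
        intro hsub
        exact hU₁V₁ (Finset.eq_of_subset_of_card_le hsub (le_of_eq (by rw [hU₁c, hV₁c])))
      obtain ⟨b, hb⟩ : (V₁ \ U₁).Nonempty := by
        rw [Finset.sdiff_nonempty]
        intro hsub
        exact hU₁V₁ ((Finset.eq_of_subset_of_card_le hsub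
          (le_of_eq (by rw [hU₁c, hV₁c]))).symm)
      have haU₁ : a ∈ U₁ := (Finset.mem_sdiff.mp ha).1
      have haV₁ : a ∉ V₁ := (Finset.mem_sdiff.mp ha).2
      have haU₂ : a ∉ e \ U₁ := fun h => (Finset.mem_sdiff.mp h).2 haU₁
      have haV₂ : a ∉ f \ V₁ := Finset.disjoint_left.mp hdU₁V₂ haU₁
      have hbV₁ : b ∈ V₁ := (Finset.mem_sdiff.mp hb).1
      have hbU₁ : b ∉ U₁ := (Finset.mem_sdiff.mp hb).2
      have hbV₂ : b ∉ f \ V₁ := fun h => (Finset.mem_sdiff.mp h).2 hbV₁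
      have hbU₂ : b ∉ e \ U₁ := Finset.disjoint_left.mp hdV₁U₂ hbV₁
      have hab : a ≠ b := fun h => haV₁ (h ▸ hbV₁)
      refine key a b U₁ V₁ (∏ w ∈ f \ V₁, x w - ∏ w ∈ e \ U₁, x w)
        hab haU₁ hbV₁ haV₁ hbU₁ hΔ₂pos ?_ hPG'x
      intro t
      rw [hswitch (zc x k a b t)]
      have hcU₂ : ∏ w ∈ e \ U₁, zc x k a b t w = ∏ w ∈ e \ U₁, x w :=
        Finset.prod_congr rfl fun w hw =>
          zc_ne (fun h => haU₂ (h ▸ hw)) (fun h => hbU₂ (h ▸ hw))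
      have hcV₂ : ∏ w ∈ f \ V₁, zc x k a b t w = ∏ w ∈ f \ V₁, x w :=
        Finset.prod_congr rfl fun w hw =>
          zc_ne (fun h => haV₂ (h ▸ hw)) (fun h => hbV₂ (h ▸ hw))
      rw [hcU₂, hcV₂]
      ring
    exact ⟨claimA, claimB⟩
  · -- products equal implies aspec equal
    rintro ⟨hp1, hp2⟩
    refine le_antisymm hle ?_
    have hNG := Nv_eq_aspec hk hα0 hα1' hGu hx'
    have hdg : ∀ v, dg G' v = dg G v := by
      intro v
      rw [dg, hG', TwoSwitch.sum_switch he hf hef he'new hf'new he'f', ← dg]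
      have hA : (if v ∈ e then (1:ℝ) else 0)
          = (if v ∈ U₁ then (1:ℝ) else 0) + (if v ∈ e \ U₁ then (1:ℝ) else 0) := by
        have h6 := ind_union hdU₁U₂ v
        rw [heU] at h6; exact h6
      have hB : (if v ∈ f then (1:ℝ) else 0)
          = (if v ∈ V₁ then (1:ℝ) else 0) + (if v ∈ f \ V₁ then (1:ℝ) else 0) := by
        have h6 := ind_union hdV₁V₂ v
        rw [hfV] at h6; exact h6
      rw [hA, hB, ind_union hdU₁V₂ v, ind_union hdV₁U₂ v]
      ring
    have hSv : ∀ v, Sv G' x v = Sv G x v := by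
      intro v
      rw [Sv, hG', TwoSwitch.sum_switch he hf hef he'new hf'new he'f', ← Sv]
      have hA : (if v ∈ e then ∏ w ∈ e.erase v, x w else 0)
          = (if v ∈ U₁ then (∏ w ∈ U₁.erase v, x w) * ∏ w ∈ e \ U₁, x w else 0)
            + (if v ∈ e \ U₁ then (∏ w ∈ U₁, x w) * ∏ w ∈ (e \ U₁).erase v, x w else 0) := by
        have h6 := contrib_union hdU₁U₂ x v
        rw [heU] at h6; exact h6
      have hB : (if v ∈ f then ∏ w ∈ f.erase v, x w else 0)
          = (if v ∈ V₁ then (∏ w ∈ V₁.erase v, x w) * ∏ w ∈ f \ V₁, x w else 0)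
            + (if v ∈ f \ V₁ then (∏ w ∈ V₁, x w) * ∏ w ∈ (f \ V₁).erase v, x w else 0) := by
        have h6 := contrib_union hdV₁V₂ x v
        rw [hfV] at h6; exact h6
      rw [hA, hB, contrib_union hdU₁V₂ x v, contrib_union hdV₁U₂ x v, hp1, hp2]
      ring
    have hNG' : ∀ v, Nv G' k α x v = G.aspec k α := by
      intro v
      have h6 := hNG v
      rw [Nv] at h6 ⊢
      rw [hdg v, hSv v]
      exact h6
    refine aspec_le_of_forall ⟨_, mem_aset (G := G') (k := k) (α := α) hfeasx0 hsum1⟩ ?_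
    intro y hy0 hy1
    exact P_le_of_eigen hk hα1' huniform' hpos hNG' hy0 hy1
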